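/- Let G₁ and G₂ be finite groups with a common subgroup G₃, let Γ = G₁ *_{G₃} G₂ be their amalgamated free product, and let φ : Γ → H be a homomorphism to a group H. Then the kernel of φ is torsion-free if and only if the restrictions of φ to G₁ and to G₂ are both injective. -/

import Mathlib

set_option linter.unusedSectionVars false
set_option maxHeartbeats 1000000

open Monoid CoprodI PushoutI Function

private theorem conj_pow'' {G : Type*} [Group G] (a g : G) (k : ℕ) :
    (a⁻¹ * g * a) ^ k = a⁻¹ * g ^ k * a := by
  induction k with
  | zero => simp
  | succ k ih => rw [pow_succ, ih, pow_succ]; group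

namespace Monoid.CoprodI.Word

variable {ι : Type*} {M : ι → Type*} [∀ i, Monoid (M i)] [∀ i, DecidableEq (M i)] [DecidableEq ι]

theorem rcons_length_le {i : ι} (p : Pair M i) :
    (rcons p).toList.length ≤ p.tail.toList.length + 1 := by
  rw [rcons]
  split <;> simp [cons]

theorem equivPair_tail_length_le {i : ι} (w : Word M) :
    (equivPair i w).tail.toList.length ≤ w.toList.length := by
  conv_rhs => rw [← (equivPair i).symm_apply_apply w, equivPair_symm, rcons]
  split <;> simp [cons]

theorem equivPair_tail_length_add_one {i : ι} (w : Word M) (h : w.fstIdx = some i) :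
    (equivPair i w).tail.toList.length + 1 = w.toList.length := by
  have hw : rcons (equivPair i w) = w := by
    rw [← equivPair_symm]; exact (equivPair i).symm_apply_apply w
  rcases eq_or_ne (equivPair i w).head 1 with h1 | h1
  · rw [rcons, dif_pos h1] at hw
    exact absurd (by rw [hw]; exact h) (equivPair i w).fstIdx_ne
  · rw [rcons, dif_neg h1] at hw
    conv_rhs => rw [← hw]
    simp [cons]

end Monoid.CoprodI.Word

namespace Monoid.PushoutI.NormalWord

variable {ι : Type*} {G : ι → Type*} {H : Type*} [∀ i, Group (G i)] [Group H]
  {φ : ∀ i, H →* G i} {d : Transversal φ} [DecidableEq ι] [∀ i, DecidableEq (G i)]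

theorem rcons_length_le' (i : ι) (p : Pair d i) :
    (rcons i p).toList.length ≤ p.tail.toList.length + 1 :=
  Word.rcons_length_le ⟨(((d.compl i).equiv p.head).2 : G i), p.tail, p.fstIdx_ne⟩

theorem equivPair_tail_eq (i : ι) (w : NormalWord d) :
    (equivPair i w).tail = (Word.equivPair i w.toWord).tail := by
  show (Word.equivPair i (CoprodI.of (φ i w.head) • w.toWord)).tail = _
  rw [Word.equivPair_smul_same]

theorem of_smul_length_le (i : ι) (g : G i) (w : NormalWord d) :
    (of (φ := φ) i g • w).toList.length ≤ w.toList.length + 1 := by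
  rw [summand_smul_def]
  refine le_trans (rcons_length_le' i _) ?_
  show (equivPair i w).tail.toList.length + 1 ≤ _
  rw [equivPair_tail_eq]
  exact Nat.add_le_add_right (Word.equivPair_tail_length_le _) 1

theorem of_smul_length_le' (i : ι) (g : G i) (w : NormalWord d)
    (hw : w.toWord.fstIdx = some i) :
    (of (φ := φ) i g • w).toList.length ≤ w.toList.length := by
  rw [summand_smul_def]
  refine le_trans (rcons_length_le' i _) ?_
  show (equivPair i w).tail.toList.length + 1 ≤ _
  rw [equivPair_tail_eq, Word.equivPair_tail_length_add_one _ hw]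

theorem rcons_fstIdx_or (i : ι) (p : Pair d i) :
    (rcons i p).toWord.fstIdx = some i ∨ (rcons i p).toWord = p.tail := by
  show (Word.rcons _).fstIdx = some i ∨ Word.rcons _ = p.tail
  rw [Word.rcons]
  split
  · exact Or.inr rfl
  · exact Or.inl (Word.fstIdx_cons _ _ _ _)

theorem of_smul_empty_fstIdx_or (i : ι) (g : G i) :
    (of (φ := φ) i g • (empty : NormalWord d)).toWord.fstIdx = some i ∨
    (of (φ := φ) i g • (empty : NormalWord d)).toList = [] := by
  rw [summand_smul_def]
  have h2 : (equivPair i (empty : NormalWord d)).tail = Word.empty := by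
    rw [equivPair_tail_eq]
    have : (Word.empty : Word G).fstIdx ≠ some i := by
      simp [Word.fstIdx, Word.empty]
    show ((Word.equivPair i) Word.empty).tail = Word.empty
    rw [Word.equivPair_eq_of_fstIdx_ne this]
  set p : Pair d i := { equivPair i (empty : NormalWord d) with
      head := g * (equivPair i (empty : NormalWord d)).head } with hp
  rcases rcons_fstIdx_or i p with h | h
  · exact Or.inl h
  · right
    show (rcons i p).toWord.toList = []
    rw [h]
    show (equivPair i (empty : NormalWord d)).tail.toList = []
    rw [h2]
    rfl

theorem prod_smul_eq_of_ne (u : NormalWord d) :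
    ∀ (w : NormalWord d), u.toList ≠ [] → w.toList ≠ [] →
      w.toWord.fstIdx ≠ u.toList.getLast?.map Sigma.fst →
      (u.prod • w).toList.length = u.toList.length + w.toList.length ∧
      (u.prod • w).toWord.fstIdx = u.toWord.fstIdx ∧
      (u.prod • w).toList.getLast? = w.toList.getLast? := by
  induction u using consRecOn with
  | empty => intro w hu _ _; simp [empty] at hu
  | cons i g z hmw hgn hgr hz1 ih =>
    intro w _ hw hne
    have hcl : (cons g z hmw hgr).toList
        = ⟨i, (((d.compl i).equiv (g * φ i z.head)).2 : G i)⟩ :: z.toList := by simp [cons]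
    rw [prod_cons, mul_smul]
    by_cases hz : z.toList = []
    · have hz0 : z.prod = 1 := by
        simp [prod, hz1, Word.prod, hz]
      rw [hz0, one_smul]
      have hlast : (cons g z hmw hgr).toList.getLast?.map Sigma.fst = some i := by
        rw [hcl, hz]; rfl
      have hfw : w.toWord.fstIdx ≠ some i := by rw [hlast] at hne; exact hne
      rw [← cons_eq_smul g w hfw hgr]
      have hcw : (cons g w hfw hgr).toList
          = ⟨i, (((d.compl i).equiv (g * φ i w.head)).2 : G i)⟩ :: w.toList := by simp [cons]
      refine ⟨?_, ?_, ?_⟩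
      · rw [hcw, hcl, hz]; simp [Nat.add_comm]
      · show (cons g w hfw hgr).toWord.fstIdx = (cons g z hmw hgr).toWord.fstIdx
        simp [Word.fstIdx, hcw, hcl]
      · rw [hcw, List.getLast?_cons_of_ne_nil hw]
    · have hlastz : (cons g z hmw hgr).toList.getLast? = z.toList.getLast? := by
        rw [hcl]; exact List.getLast?_cons_of_ne_nil hz
      obtain ⟨ihlen, ihfst, ihlast⟩ := ih w hz hw (by rw [hlastz] at hne; exact hne)
      have hfst2 : (z.prod • w).toWord.fstIdx ≠ some i := by rw [ihfst]; exact hmw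
      rw [← cons_eq_smul g _ hfst2 hgr]
      have hcw : (cons g (z.prod • w) hfst2 hgr).toList
          = ⟨i, (((d.compl i).equiv (g * φ i (z.prod • w).head)).2 : G i)⟩
              :: (z.prod • w).toList := by simp [cons]
      have hnnil : (z.prod • w).toList ≠ [] := by
        intro h0
        have := ihlen
        rw [h0] at this
        simp only [List.length_nil] at this
        have hwpos : 0 < w.toList.length := List.length_pos_of_ne_nil hw
        omega
      refine ⟨?_, ?_, ?_⟩
      · rw [hcw, hcl]
        simp only [List.length_cons, ihlen]
        omega
      · show _ = (cons g z hmw hgr).toWord.fstIdx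
        simp [Word.fstIdx, hcw, hcl]
      · rw [hcw, List.getLast?_cons_of_ne_nil hnnil, ihlast]
  | base h z hz1 ih =>
    intro w hu hw hne
    have hb : (base φ h • z).toList = z.toList := by rw [base_smul_def]
    have hb2 : (base φ h • z).toWord.fstIdx = z.toWord.fstIdx := by rw [base_smul_def]
    rw [prod_smul, mul_smul]
    have hb3 : (base φ h • (z.prod • w)).toList = (z.prod • w).toList := by
      rw [base_smul_def]
    have hb4 : (base φ h • (z.prod • w)).toWord.fstIdx = (z.prod • w).toWord.fstIdx := by
      rw [base_smul_def]
    obtain ⟨l1, l2, l3⟩ := ih w (by rwa [hb] at hu) hw (by rwa [hb] at hne)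
    exact ⟨by rw [hb3, hb, l1], by rw [hb4, hb2, l2], by rw [hb3, l3]⟩

theorem prod_smul_length_le (u : NormalWord d) :
    ∀ (w : NormalWord d), w.toList.length ≤ 1 →
      (w.toList = [] ∨ w.toWord.fstIdx = u.toList.getLast?.map Sigma.fst) →
      (u.prod • w).toList.length ≤ max u.toList.length w.toList.length := by
  induction u using consRecOn with
  | empty =>
    intro w _ _
    have : (empty : NormalWord d).prod = 1 := prod_empty
    rw [this, one_smul]
    exact le_max_right _ _
  | cons i g z hmw hgn hgr hz1 ih =>
    intro w hw1 hcompat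
    have hcl : (cons g z hmw hgr).toList
        = ⟨i, (((d.compl i).equiv (g * φ i z.head)).2 : G i)⟩ :: z.toList := by simp [cons]
    rw [prod_cons, mul_smul]
    by_cases hz : z.toList = []
    · have hz0 : z.prod = 1 := by simp [prod, hz1, Word.prod, hz]
      rw [hz0, one_smul]
      rcases hcompat with h0 | hfw
      · refine le_trans (of_smul_length_le i g w) ?_
        rw [h0, hcl, hz]
        simp
      · have hlast : (cons g z hmw hgr).toList.getLast?.map Sigma.fst = some i := by
          rw [hcl, hz]; rfl
        rw [hlast] at hfw
        exact le_trans (of_smul_length_le' i g w hfw) (le_max_right _ _)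
    · have hlastz : (cons g z hmw hgr).toList.getLast? = z.toList.getLast? := by
        rw [hcl]; exact List.getLast?_cons_of_ne_nil hz
      have ih2 := ih w hw1 (by rw [hlastz] at hcompat; exact hcompat)
      refine le_trans (of_smul_length_le i g _) ?_
      have hzpos : 1 ≤ z.toList.length := List.length_pos_of_ne_nil hz
      rw [hcl]
      simp only [List.length_cons]
      omega
  | base h z hz1 ih =>
    intro w hw1 hcompat
    have hb : (base φ h • z).toList = z.toList := by rw [base_smul_def]
    rw [prod_smul, mul_smul]
    have hb3 : (base φ h • (z.prod • w)).toList = (z.prod • w).toList := by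
      rw [base_smul_def]
    rw [hb3, hb]
    exact ih w hw1 (by rwa [hb] at hcompat)

end Monoid.PushoutI.NormalWord


namespace Monoid.PushoutI

open NormalWord

theorem exists_conj_of_isOfFinOrder {ι : Type*} [Nonempty ι] {G : ι → Type*} {H : Type*}
    [∀ i, Group (G i)] [Group H] {φ : ∀ i, H →* G i} (hφ : ∀ i, Injective (φ i)) :
    ∀ (g : PushoutI φ), IsOfFinOrder g →
      ∃ (c : PushoutI φ) (i : ι) (x : G i), g = c * of i x * c⁻¹ := by
  classical
  obtain ⟨d⟩ := transversal_nonempty φ hφ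
  suffices key : ∀ (n : ℕ) (g : PushoutI φ), IsOfFinOrder g →
      (g • (empty : NormalWord d)).toList.length = n →
      ∃ c i x, g = c * of i x * c⁻¹ by
    intro g hg
    exact key _ g hg rfl
  intro n
  induction n using Nat.strong_induction_on with
  | _ n ih =>
  intro g hg hlen
  set w : NormalWord d := g • empty with hwdef
  have hprod : w.prod = g := by rw [hwdef, prod_smul, prod_empty, mul_one]
  rcases hn : w.toList with _ | ⟨⟨i, x⟩, tl⟩
  · have hgb : g = base φ w.head := by
      rw [← hprod]
      show NormalWord.prod w = _
      simp [NormalWord.prod, Word.prod, hn]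
    obtain ⟨i₀⟩ := ‹Nonempty ι›
    refine ⟨1, i₀, φ i₀ w.head, ?_⟩
    rw [hgb, of_apply_eq_base, one_mul, inv_one, mul_one]
  rcases tl with _ | ⟨⟨j, y0⟩, tl2⟩
  · have hgb : g = base φ w.head * of i x := by
      rw [← hprod]
      show NormalWord.prod w = _
      simp [NormalWord.prod, Word.prod, hn, ofCoprodI_of]
    refine ⟨1, i, φ i w.head * x, ?_⟩
    rw [hgb, map_mul, of_apply_eq_base, one_mul, inv_one, mul_one]
  · -- length at least two
    have hn2 : 2 ≤ n := by
      rw [← hlen, hn]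
      simp
    have hnne : n ≠ 0 := by omega
    set z : NormalWord d :=
      { toList := ⟨j, y0⟩ :: tl2,
        ne_one := fun l hl => w.toWord.ne_one l (by
          show l ∈ w.toList
          rw [hn]; exact List.mem_cons_of_mem _ hl),
        chain_ne := by
          have hc := w.toWord.chain_ne
          have hc2 : w.toList.Chain' (fun l l' : Σ i, G i => l.1 ≠ l'.1) := hc
          rw [hn] at hc2
          exact hc2.tail,
        head := 1,
        normalized := fun k gk hgk => w.normalized k gk (by
          show (⟨k, gk⟩ : Σ i, G i) ∈ w.toList
          rw [hn]; exact List.mem_cons_of_mem _ hgk) } with hzdef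
    have hzl : z.toList = ⟨j, y0⟩ :: tl2 := rfl
    have hgfact : g = base φ w.head * of i x * z.prod := by
      rw [← hprod]
      show NormalWord.prod w = _
      simp [NormalWord.prod, Word.prod, hn, hzl, ofCoprodI_of, map_mul, mul_assoc, show z.head = 1 from rfl]
    have hfst : w.toWord.fstIdx = some i := by
      show (w.toList.head?).map Sigma.fst = some i
      rw [hn]; rfl
    by_cases hcyc : w.toWord.fstIdx = w.toList.getLast?.map Sigma.fst
    · -- conjugate to something shorter
      have hlast : w.toList.getLast?.map Sigma.fst = some i := by rw [← hcyc, hfst]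
      obtain ⟨a, hadef⟩ : ∃ a' : PushoutI φ, a' = base φ w.head * of i x := ⟨_, rfl⟩
      obtain ⟨y, hydef⟩ : ∃ y' : G i, y' = φ i w.head * x := ⟨_, rfl⟩
      have hay : a = of i y := by rw [hadef, hydef, map_mul, of_apply_eq_base]
      have ha : g = a * z.prod := by rw [hadef]; exact hgfact
      obtain ⟨g', hg'def⟩ : ∃ q : PushoutI φ, q = a⁻¹ * g * a := ⟨_, rfl⟩
      have hg'eq : g' = z.prod * of i y := by
        rw [hg'def, ha, ← hay]; group
      have hfin' : IsOfFinOrder g' := by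
        obtain ⟨m, hm0, hm⟩ := isOfFinOrder_iff_pow_eq_one.1 hg
        exact isOfFinOrder_iff_pow_eq_one.2 ⟨m, hm0, by rw [hg'def, conj_pow'', hm]; group⟩
      obtain ⟨v, hvdef⟩ : ∃ v' : NormalWord d, v' = of (φ := φ) i y • empty := ⟨_, rfl⟩
      have hv1 : v.toList.length ≤ 1 := by
        have h := of_smul_length_le i y (empty : NormalWord d)
        have he : (empty : NormalWord d).toList.length = 0 := rfl
        rw [hvdef]
        omega
      have hvor : v.toList = [] ∨ v.toWord.fstIdx = some i := by
        rw [hvdef]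
        exact (of_smul_empty_fstIdx_or i y).symm
      have hzlast : z.toList.getLast?.map Sigma.fst = some i := by
        have hgl : w.toList.getLast? = z.toList.getLast? := by
          rw [hn, hzl]
          exact List.getLast?_cons_of_ne_nil (List.cons_ne_nil _ _)
        rw [← hgl]; exact hlast
      have hbound := prod_smul_length_le z v hv1 (by
        rcases hvor with h | h
        · exact Or.inl h
        · exact Or.inr (by rw [h, hzlast]))
      have hzlen : z.toList.length = n - 1 := by
        have h1 : w.toList.length = z.toList.length + 1 := by rw [hn, hzl]; simp
        omega
      have hg'len : (g' • (empty : NormalWord d)).toList.length < n := by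
        have hve : g' • (empty : NormalWord d) = z.prod • v := by
          rw [hg'eq, mul_smul, hvdef]
        rw [hve]
        have hmax : max z.toList.length v.toList.length ≤ n - 1 :=
          max_le (by omega) (by omega)
        omega
      obtain ⟨c, j', x', hc⟩ := ih _ hg'len g' hfin' rfl
      refine ⟨a * c, j', x', ?_⟩
      have hga : g = a * g' * a⁻¹ := by rw [hg'def]; group
      rw [hga, hc, mul_inv_rev]; group
    · -- cyclically reduced: infinite order, contradiction
      exfalso
      have hwne : w.toList ≠ [] := by rw [hn]; exact List.cons_ne_nil _ _
      have grow : ∀ k : ℕ, (g ^ (k + 1) • (empty : NormalWord d)).toList.length = (k + 1) * n ∧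
          (g ^ (k + 1) • (empty : NormalWord d)).toWord.fstIdx = w.toWord.fstIdx ∧
          (g ^ (k + 1) • (empty : NormalWord d)).toList.getLast? = w.toList.getLast? := by
        intro k
        induction k with
        | zero =>
          rw [pow_one, ← hwdef]
          exact ⟨by rw [hlen]; ring, rfl, rfl⟩
        | succ k ihk =>
          obtain ⟨l1, l2, l3⟩ := ihk
          have hpow : g ^ (k + 1 + 1) • (empty : NormalWord d)
              = w.prod • (g ^ (k + 1) • (empty : NormalWord d)) := by
            rw [hprod, ← mul_smul, ← pow_succ']
          rw [hpow]
          have hprevne : (g ^ (k + 1) • (empty : NormalWord d)).toList ≠ [] := by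
            intro h0
            rw [h0] at l1
            simp only [List.length_nil] at l1
            have : (k + 1) * n ≠ 0 := by positivity
            omega
          have hne2 : (g ^ (k + 1) • (empty : NormalWord d)).toWord.fstIdx
              ≠ w.toList.getLast?.map Sigma.fst := by rw [l2]; exact hcyc
          obtain ⟨a1, a2, a3⟩ := prod_smul_eq_of_ne w _ hwne hprevne hne2
          refine ⟨?_, by rw [a2], by rw [a3, l3]⟩
          rw [a1, l1, hlen]
          ring
      obtain ⟨m, hm0, hm⟩ := isOfFinOrder_iff_pow_eq_one.1 hg
      obtain ⟨m', rfl⟩ : ∃ m', m = m' + 1 := ⟨m - 1, by omega⟩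
      obtain ⟨l1, -, -⟩ := grow m'
      rw [hm, one_smul] at l1
      have he : (empty : NormalWord d).toList.length = 0 := rfl
      rw [he] at l1
      have : (m' + 1) * n ≠ 0 := by positivity
      omega

end Monoid.PushoutI




universe u

/-- The two-element family of groups used to form the amalgam `G₁ *_{G₃} G₂`
as an indexed pushout over `Bool`. -/
def AmalgamFam (G₁ G₂ : Type u) : Bool → Type u
  | false => G₁
  | true => G₂

instance (G₁ G₂ : Type u) [Group G₁] [Group G₂] : ∀ b, Group (AmalgamFam G₁ G₂ b)
  | false => ‹Group G₁›
  | true => ‹Group G₂›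

/-- Old Mathlib definition (removed since): no nontrivial element has finite order. -/
def Monoid.IsTorsionFree (G : Type*) [Monoid G] : Prop :=
  ∀ g : G, g ≠ 1 → ¬IsOfFinOrder g

/-- The pair of inclusions `G₃ → G₁`, `G₃ → G₂` as a family indexed by `Bool`. -/
def amalgamHom {G₁ G₂ : Type u} {G₃ : Type*} [Group G₁] [Group G₂] [Group G₃]
    (f₁ : G₃ →* G₁) (f₂ : G₃ →* G₂) : ∀ b, G₃ →* AmalgamFam G₁ G₂ b
  | false => f₁
  | true => f₂

/-- For finite groups `G₁, G₂` with common subgroup `G₃` and `Γ = G₁ *_{G₃} G₂`,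
the kernel of a homomorphism `ψ : Γ → H` is torsion-free iff the restrictions of `ψ`
to `G₁` and to `G₂` are both injective. -/
theorem stmt_0 (G₁ G₂ : Type u) (G₃ H : Type*) [Group G₁] [Group G₂] [Group G₃] [Group H]
    [Finite G₁] [Finite G₂]
    (f₁ : G₃ →* G₁) (f₂ : G₃ →* G₂)
    (hf₁ : Function.Injective f₁) (hf₂ : Function.Injective f₂)
    (ψ : Monoid.PushoutI (amalgamHom f₁ f₂) →* H) :
    Monoid.IsTorsionFree ↥ψ.ker ↔
      (Function.Injective (ψ.comp (Monoid.PushoutI.of (φ := amalgamHom f₁ f₂) false)) ∧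
       Function.Injective (ψ.comp (Monoid.PushoutI.of (φ := amalgamHom f₁ f₂) true))) := by
    classical
  have hφ : ∀ b, Function.Injective (amalgamHom f₁ f₂ b) := by
    intro b
    cases b
    · exact hf₁
    · exact hf₂
  constructor
  · intro htf
    have key : ∀ (b : Bool), (∀ x : AmalgamFam G₁ G₂ b, IsOfFinOrder x) →
        Function.Injective (ψ.comp (Monoid.PushoutI.of (φ := amalgamHom f₁ f₂) b)) := by
      intro b hfin
      rw [injective_iff_map_eq_one]
      intro x hx
      have hker : Monoid.PushoutI.of (φ := amalgamHom f₁ f₂) b x ∈ ψ.ker := hx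
      have hfo : IsOfFinOrder ((Monoid.PushoutI.of (φ := amalgamHom f₁ f₂) b) x) :=
        (Monoid.PushoutI.of (φ := amalgamHom f₁ f₂) b).isOfFinOrder (hfin x)
      have hfok : IsOfFinOrder (⟨_, hker⟩ : ψ.ker) := Submonoid.isOfFinOrder_coe.1 hfo
      have hk1 : (⟨_, hker⟩ : ψ.ker) = 1 := by
        by_contra hk
        exact htf _ hk hfok
      have h1 : (Monoid.PushoutI.of (φ := amalgamHom f₁ f₂) b) x = 1 := by
        simpa using congrArg Subtype.val hk1
      exact Monoid.PushoutI.of_injective hφ b (by rw [h1, map_one])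
    refine ⟨key false ?_, key true ?_⟩
    · haveI : Finite (AmalgamFam G₁ G₂ false) := ‹Finite G₁›
      exact fun x => isOfFinOrder_of_finite x
    · haveI : Finite (AmalgamFam G₁ G₂ true) := ‹Finite G₂›
      exact fun x => isOfFinOrder_of_finite x
  · rintro ⟨h1, h2⟩ k hk1 hfok
    have hfo : IsOfFinOrder (k : Monoid.PushoutI (amalgamHom f₁ f₂)) :=
      Submonoid.isOfFinOrder_coe.2 hfok
    obtain ⟨c, b, x, hc⟩ := Monoid.PushoutI.exists_conj_of_isOfFinOrder hφ _ hfo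
    have hψk : ψ (k : Monoid.PushoutI (amalgamHom f₁ f₂)) = 1 := k.2
    have hx1 : (ψ.comp (Monoid.PushoutI.of (φ := amalgamHom f₁ f₂) b)) x = 1 := by
      rw [hc, map_mul, map_mul, map_inv, conj_eq_one_iff] at hψk
      exact hψk
    have hx : x = 1 := by
      have happ : (ψ.comp (Monoid.PushoutI.of (φ := amalgamHom f₁ f₂) b)) x =
          (ψ.comp (Monoid.PushoutI.of (φ := amalgamHom f₁ f₂) b)) 1 := by
        rw [map_one]; exact hx1
      cases b
      · exact h1 happ
      · exact h2 happ
    apply hk1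
    apply Subtype.ext
    rw [hc, hx, map_one, mul_one, mul_inv_cancel]
    rfl
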